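/- Consider four tasks a, b, gG, gP with frequencies f(a)=3, f(b)=3, f(gG)=6, f(gP)=6, and let S be a valid schedule assigning at most one task to each day (so every window of f consecutive days contains the corresponding task). Suppose additionally that gG is scheduled only on days t with t ≡ 2 (mod 6). Then gG is scheduled on exactly the days t ≡ 2 (mod 6), gP is scheduled on exactly the days t ≡ 5 (mod 6), and either a is scheduled on exactly the days t ≡ 0 (mod 3) and b on exactly the days t ≡ 1 (mod 3), or a is scheduled on exactly the days t ≡ 1 (mod 3) and b on exactly the days t ≡ 0 (mod 3). (This is the Variable gadget lemma: a variable gadget's local schedule must have the form [3_a, 3_b, 6_G, 3_a, 3_b, 6_P], where the choice of which frequency-3 edge occupies the red slots encodes the truth value of the variable.) -/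
import Mathlib


/-- Variable gadget lemma.
Tasks: 0 = a (freq 3), 1 = b (freq 3), 2 = gG (freq 6), 3 = gP (freq 6).
If gG is restricted to green slots (t ≡ 2 mod 6), then gG occupies exactly
the green slots, gP exactly the purple slots (t ≡ 5 mod 6), and either a is
scheduled exactly on the red slots (t ≡ 0 mod 3) and b exactly on the blue
slots (t ≡ 1 mod 3), or vice versa. -/
theorem variable_gadget (f : Fin 4 → ℕ) (hf : f = ![3, 3, 6, 6])
    (S : ℕ → Option (Fin 4))
    (hS : ∀ (i : Fin 4) (t : ℕ), ∃ j < f i, S (t + j) = some i)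
    (hgG : ∀ t : ℕ, S t = some 2 → t % 6 = 2) :
    (∀ t : ℕ, S t = some 2 ↔ t % 6 = 2) ∧
    (∀ t : ℕ, S t = some 3 ↔ t % 6 = 5) ∧
    (((∀ t : ℕ, S t = some 0 ↔ t % 3 = 0) ∧
      (∀ t : ℕ, S t = some 1 ↔ t % 3 = 1)) ∨
     ((∀ t : ℕ, S t = some 0 ↔ t % 3 = 1) ∧
      (∀ t : ℕ, S t = some 1 ↔ t % 3 = 0))) := by
  subst hf
  have hA : ∀ t, ∃ j < 3, S (t + j) = some 0 := fun t => by simpa using hS 0 t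
  have hB : ∀ t, ∃ j < 3, S (t + j) = some 1 := fun t => by simpa using hS 1 t
  have hGf : ∀ t, ∃ j < 6, S (t + j) = some 2 := fun t => by simpa using hS 2 t
  have hPf : ∀ t, ∃ j < 6, S (t + j) = some 3 := fun t => by simpa using hS 3 t
  clear hS
  -- gG exactly on days 6k+2
  have hG : ∀ k, S (6 * k + 2) = some 2 := by
    intro k
    obtain ⟨j, hj, hSj⟩ := hGf (6 * k)
    have hm := hgG _ hSj
    have : j = 2 := by omega
    subst this; exact hSj
  -- pair lemmas
  have pairL : ∀ t, S (t + 2) = some 2 →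
      (S t = some 0 ∧ S (t + 1) = some 1) ∨ (S t = some 1 ∧ S (t + 1) = some 0) := by
    intro t h2
    obtain ⟨j, hj, hSj⟩ := hA t
    obtain ⟨j', hj', hSj'⟩ := hB t
    clear hA hB hGf hPf hG hgG
    interval_cases j <;> interval_cases j' <;> simp_all
  have pairR : ∀ t, S t = some 2 →
      (S (t + 1) = some 0 ∧ S (t + 2) = some 1) ∨
      (S (t + 1) = some 1 ∧ S (t + 2) = some 0) := by
    intro t h2
    obtain ⟨j, hj, hSj⟩ := hA t
    obtain ⟨j', hj', hSj'⟩ := hB t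
    clear hA hB hGf hPf hG hgG
    interval_cases j <;> interval_cases j' <;> simp_all
  have hGiff : ∀ t, S t = some 2 ↔ t % 6 = 2 := by
    intro t
    refine ⟨hgG t, fun h => ?_⟩
    have := hG (t / 6)
    rwa [show 6 * (t / 6) + 2 = t by omega] at this
  -- gP exactly on days 6k+5
  have hP : ∀ k, S (6 * k + 5) = some 3 := by
    intro k
    obtain ⟨j, hj, hSj⟩ := hPf (6 * k)
    have p1 := pairL (6 * k) (hG k)
    have p2 := pairR (6 * k + 2) (hG k)
    rw [show 6 * k + 2 + 1 = 6 * k + 3 by omega, show 6 * k + 2 + 2 = 6 * k + 4 by omega] at p2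
    have hg := hG k
    clear hA hB hGf hPf hG hgG pairL pairR hGiff
    rcases p1 with ⟨h0, h1⟩ | ⟨h0, h1⟩ <;> rcases p2 with ⟨h3, h4⟩ | ⟨h3, h4⟩ <;>
      interval_cases j <;> simp_all
  -- classification: days with residue 0 or 1 mod 3 carry task 0 or 1
  have hclass : ∀ t, t % 3 ≤ 1 → S t = some 0 ∨ S t = some 1 := by
    intro t ht
    have p1 := pairL (6 * (t / 6)) (hG (t / 6))
    have p2 := pairR (6 * (t / 6) + 2) (hG (t / 6))
    rw [show 6 * (t / 6) + 2 + 1 = 6 * (t / 6) + 3 by omega,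
        show 6 * (t / 6) + 2 + 2 = 6 * (t / 6) + 4 by omega] at p2
    have hcases : t = 6 * (t / 6) ∨ t = 6 * (t / 6) + 1 ∨ t = 6 * (t / 6) + 3 ∨
        t = 6 * (t / 6) + 4 := by omega
    rcases hcases with h | h | h | h <;> rw [h] <;> tauto
  have hPiff : ∀ t, S t = some 3 ↔ t % 6 = 5 := by
    intro t
    constructor
    · intro h
      have h3 : t % 3 ≤ 1 ∨ t % 6 = 2 ∨ t % 6 = 5 := by omega
      rcases h3 with h3 | h3 | h3
      · rcases hclass t h3 with hc | hc <;> exact absurd (hc.symm.trans h) (by decide)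
      · exact absurd (((hGiff t).mpr h3).symm.trans h) (by decide)
      · exact h3
    · intro h
      have := hP (t / 6)
      rwa [show 6 * (t / 6) + 5 = t by omega] at this
  -- no a/b on days ≡ 2 mod 3
  have hg2 : ∀ d (i : Fin 4), i = 0 ∨ i = 1 → d % 3 = 2 → S d ≠ some i := by
    intro d i hi hd hc
    have h6 : d % 6 = 2 ∨ d % 6 = 5 := by omega
    rcases h6 with h | h
    · have := (hGiff d).mpr h
      rcases hi with rfl | rfl <;> exact absurd (this.symm.trans hc) (by decide)
    · have := (hPiff d).mpr h
      rcases hi with rfl | rfl <;> exact absurd (this.symm.trans hc) (by decide)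
  -- step lemma
  have step : ∀ (i i' : Fin 4), (i = 0 ∧ i' = 1) ∨ (i = 1 ∧ i' = 0) →
      ∀ t, t % 3 ≤ 1 → S t = some i → S (t + 3) = some i := by
    intro i i' hii t ht hSt
    have hi : i = 0 ∨ i = 1 := by rcases hii with ⟨rfl, _⟩ | ⟨rfl, _⟩ <;> simp
    have hi' : i' = 0 ∨ i' = 1 := by rcases hii with ⟨_, rfl⟩ | ⟨_, rfl⟩ <;> simp
    have hne : (some i : Option (Fin 4)) ≠ some i' := by
      rcases hii with ⟨rfl, rfl⟩ | ⟨rfl, rfl⟩ <;> decide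
    have hwin : ∃ j < 3, S (t + 1 + j) = some i := by
      rcases hi with rfl | rfl
      · exact hA (t + 1)
      · exact hB (t + 1)
    have hwin' : ∃ j < 3, S (t + j) = some i' := by
      rcases hi' with rfl | rfl
      · exact hA t
      · exact hB t
    obtain ⟨j, hj, hSj⟩ := hwin
    obtain ⟨j', hj', hSj'⟩ := hwin'
    rcases (by omega : t % 3 = 0 ∨ t % 3 = 1) with h0 | h0
    · -- t ≡ 0: t+2 ≡ 2 is green/purple; so i at t+1 or t+3
      have hn2 : S (t + 1 + 1) ≠ some i := by
        have : (t + 2) % 3 = 2 := by omega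
        simpa [show t + 1 + 1 = t + 2 by omega] using hg2 (t + 2) i hi this
      have hj2 : j = 0 ∨ j = 2 := by
        rcases (by omega : j = 0 ∨ j = 1 ∨ j = 2) with h | h | h
        · exact Or.inl h
        · exact absurd (h ▸ hSj) hn2
        · exact Or.inr h
      rcases hj2 with rfl | rfl
      · -- S (t+1) = some i: then i' has no slot in window t..t+2
        exfalso
        simp only [add_zero] at hSj
        have hn2' : S (t + 2) ≠ some i' := hg2 (t + 2) i' hi' (by omega)
        rcases (by omega : j' = 0 ∨ j' = 1 ∨ j' = 2) with h | h | h
        · rw [h, add_zero] at hSj'; exact hne (hSt.symm.trans hSj')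
        · rw [h] at hSj'; exact hne (hSj.symm.trans hSj')
        · rw [h] at hSj'; exact hn2' hSj'
      · rwa [show t + 1 + 2 = t + 3 by omega] at hSj
    · -- t ≡ 1: t+1 ≡ 2 is green/purple; so i at t+2 or t+3
      have hn1 : S (t + 1 + 0) ≠ some i := by
        have : (t + 1) % 3 = 2 := by omega
        simpa using hg2 (t + 1) i hi this
      have hj2 : j = 1 ∨ j = 2 := by
        rcases (by omega : j = 0 ∨ j = 1 ∨ j = 2) with h | h | h
        · exact absurd (h ▸ hSj) hn1
        · exact Or.inl h
        · exact Or.inr h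
      rcases hj2 with rfl | rfl
      · -- S (t+2) = some i: then i' has no slot in window t..t+2
        exfalso
        rw [show t + 1 + 1 = t + 2 by omega] at hSj
        have hn1' : S (t + 1) ≠ some i' := hg2 (t + 1) i' hi' (by omega)
        rcases (by omega : j' = 0 ∨ j' = 1 ∨ j' = 2) with h | h | h
        · rw [h, add_zero] at hSj'; exact hne (hSt.symm.trans hSj')
        · rw [h] at hSj'; exact hn1' hSj'
        · rw [h] at hSj'; exact hne (hSj.symm.trans hSj')
      · rwa [show t + 1 + 2 = t + 3 by omega] at hSj
  -- induction to all of ℕ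
  have allk : ∀ (i i' : Fin 4), (i = 0 ∧ i' = 1) ∨ (i = 1 ∧ i' = 0) →
      S 0 = some i → S 1 = some i' →
      ∀ n, S (3 * n) = some i ∧ S (3 * n + 1) = some i' := by
    intro i i' hii h0 h1
    intro n
    induction n with
    | zero => simpa using ⟨h0, h1⟩
    | succ n ih =>
      obtain ⟨ih0, ih1⟩ := ih
      constructor
      · have := step i i' hii (3 * n) (by omega) ih0
        rwa [show 3 * n + 3 = 3 * (n + 1) by ring] at this
      · have := step i' i (by tauto) (3 * n + 1) (by omega) ih1
        rwa [show 3 * n + 1 + 3 = 3 * (n + 1) + 1 by ring] at this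
  -- full characterization given the base case
  have final : ∀ (i i' : Fin 4), (i = 0 ∧ i' = 1) ∨ (i = 1 ∧ i' = 0) →
      S 0 = some i → S 1 = some i' →
      (∀ t, S t = some i ↔ t % 3 = 0) ∧ (∀ t, S t = some i' ↔ t % 3 = 1) := by
    intro i i' hii h0 h1
    have hall := allk i i' hii h0 h1
    have hne : (some i : Option (Fin 4)) ≠ some i' := by
      rcases hii with ⟨rfl, rfl⟩ | ⟨rfl, rfl⟩ <;> decide
    have hi : i = 0 ∨ i = 1 := by rcases hii with ⟨rfl, _⟩ | ⟨rfl, _⟩ <;> simp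
    have hi' : i' = 0 ∨ i' = 1 := by rcases hii with ⟨_, rfl⟩ | ⟨_, rfl⟩ <;> simp
    constructor
    · intro t
      constructor
      · intro h
        by_contra hm
        rcases (by omega : t % 3 = 1 ∨ t % 3 = 2) with hr | hr
        · have := (hall (t / 3)).2
          rw [show 3 * (t / 3) + 1 = t by omega] at this
          exact hne (h.symm.trans this)
        · exact hg2 t i hi hr h
      · intro h
        have := (hall (t / 3)).1
        rwa [show 3 * (t / 3) = t by omega] at this
    · intro t
      constructor
      · intro h
        by_contra hm
        rcases (by omega : t % 3 = 0 ∨ t % 3 = 2) with hr | hr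
        · have := (hall (t / 3)).1
          rw [show 3 * (t / 3) = t by omega] at this
          exact hne (this.symm.trans h)
        · exact hg2 t i' hi' hr h
      · intro h
        have := (hall (t / 3)).2
        rwa [show 3 * (t / 3) + 1 = t by omega] at this
  refine ⟨hGiff, hPiff, ?_⟩
  have base := pairL 0 (by simpa using hG 0)
  rcases base with ⟨h0, h1⟩ | ⟨h0, h1⟩
  · left
    have := final 0 1 (by tauto) h0 (by simpa using h1)
    exact this
  · right
    have := final 1 0 (by tauto) h0 (by simpa using h1)
    exact ⟨this.2, this.1⟩
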